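/- Fix an integer m ≥ 1 and set x(t) = cos(2t), y(t) = cos((2m+1)t + 1/2). For each integer j with m+1 ≤ j ≤ 3m+1, let t₁(j) = ((2j − 2m − 1)π − 1)/(2(2m+1)) be the first time of the j-th Type I double point. Then: (a) y(t₁(j)) = 0 for every such j, so every Type I double point lies on the x-axis; (b) x(t₁(j)) ≠ 0 for every such j, so no Type I double point is at the origin; and (c) the number of integers j with m+1 ≤ j ≤ 3m+1 and x(t₁(j)) > 0 equals 2⌈m/2⌉. -/

import Mathlib

open Real

/-- The first time of the Type I double point with index `j` (for `m+1 ≤ j ≤ 3m+1`)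
of the projection `t ↦ (cos 2t, cos((2m+1)t + 1/2))`. -/
noncomputable def tI₁ (m j : ℤ) : ℝ :=
  ((2 * (j : ℝ) - 2 * (m : ℝ) - 1) * π - 1) / (2 * (2 * (m : ℝ) + 1))

lemma tI_two_mul (m j : ℤ) (hm : 1 ≤ m) :
    2 * tI₁ m j = ((2 * (j : ℝ) - 2 * (m : ℝ) - 1) * π - 1) / (2 * (m : ℝ) + 1) := by
  have hM : (2 * (m : ℝ) + 1) ≠ 0 := by positivity
  unfold tI₁; field_simp

lemma key (m j : ℤ) (hm : 1 ≤ m) (h1 : m + 1 ≤ j) (h2 : j ≤ 3 * m + 1) :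
    (0 < Real.cos (2 * tI₁ m j)) ↔ (2 * j ≤ 3 * m + 1 ∨ 5 * m + 3 ≤ 2 * j) := by
  have hM : (0:ℝ) < 2 * (m : ℝ) + 1 := by
    have : (1:ℝ) ≤ (m:ℝ) := by exact_mod_cast hm
    linarith
  have hθ := tI_two_mul m j hm
  have hpi : (3:ℝ) < π := Real.pi_gt_three
  constructor
  · intro hpos
    by_contra hc
    push_neg at hc
    have hn1 : (m:ℝ) + 1 ≤ 2 * (j:ℝ) - 2 * (m:ℝ) - 1 := by
      have : 3 * m + 2 ≤ 2 * j := by omega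
      have h' : ((_ : ℤ) : ℝ) ≤ _ := Int.cast_le.mpr this
      push_cast at h' ⊢; linarith
    have hn2 : 2 * (j:ℝ) - 2 * (m:ℝ) - 1 ≤ 3 * (m:ℝ) + 1 := by
      have : 2 * j ≤ 5 * m + 2 := by omega
      have h' : ((_ : ℤ) : ℝ) ≤ _ := Int.cast_le.mpr this
      push_cast at h' ⊢; linarith
    have hnp : Real.cos (2 * tI₁ m j) ≤ 0 := by
      rw [hθ]
      apply Real.cos_nonpos_of_pi_div_two_le_of_le
      · rw [le_div_iff₀ hM]; nlinarith
      · rw [div_le_iff₀ hM]; nlinarith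
    linarith
  · intro h
    rcases h with h | h
    · -- n ≤ m, θ ∈ (0, π/2)
      have hn1 : (1:ℝ) ≤ 2 * (j:ℝ) - 2 * (m:ℝ) - 1 := by
        have : m + 1 ≤ j := h1
        have h' : ((_ : ℤ) : ℝ) ≤ _ := Int.cast_le.mpr this
        push_cast at h' ⊢; linarith
      have hn2 : 2 * (j:ℝ) - 2 * (m:ℝ) - 1 ≤ (m:ℝ) := by
        have : 2 * j - 2 * m - 1 ≤ m := by omega
        have h' : ((_ : ℤ) : ℝ) ≤ _ := Int.cast_le.mpr this
        push_cast at h' ⊢; linarith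
      rw [hθ]
      apply Real.cos_pos_of_mem_Ioo
      constructor
      · rw [lt_div_iff₀ hM]; nlinarith
      · rw [div_lt_iff₀ hM]; nlinarith
    · -- n ≥ 3m+2, θ ∈ (3π/2, 2π)
      have hn1 : 3 * (m:ℝ) + 2 ≤ 2 * (j:ℝ) - 2 * (m:ℝ) - 1 := by
        have : 3 * m + 2 ≤ 2 * j - 2 * m - 1 := by omega
        have h' : ((_ : ℤ) : ℝ) ≤ _ := Int.cast_le.mpr this
        push_cast at h' ⊢; linarith
      have hn2 : 2 * (j:ℝ) - 2 * (m:ℝ) - 1 ≤ 4 * (m:ℝ) + 1 := by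
        have : 2 * j - 2 * m - 1 ≤ 4 * m + 1 := by omega
        have h' : ((_ : ℤ) : ℝ) ≤ _ := Int.cast_le.mpr this
        push_cast at h' ⊢; linarith
      rw [hθ, ← Real.cos_sub_two_pi]
      apply Real.cos_pos_of_mem_Ioo
      have hlb : 3 * π / 2 < ((2 * (j:ℝ) - 2 * (m:ℝ) - 1) * π - 1) / (2 * (m:ℝ) + 1) := by
        rw [lt_div_iff₀ hM]; nlinarith
      have hub : ((2 * (j:ℝ) - 2 * (m:ℝ) - 1) * π - 1) / (2 * (m:ℝ) + 1) < 2 * π := by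
        rw [div_lt_iff₀ hM]; nlinarith
      constructor
      · linarith
      · linarith

/-- Every Type I double point of the projection `t ↦ (cos 2t, cos((2m+1)t + 1/2))`
lies on the `x`-axis, none is at the origin, and exactly `2⌈m/2⌉` of them have
positive `x`-coordinate. -/
theorem typeI_double_points_on_x_axis (m : ℤ) (hm : 1 ≤ m) :
    (∀ j : ℤ, m + 1 ≤ j → j ≤ 3 * m + 1 →
      Real.cos ((2 * (m : ℝ) + 1) * tI₁ m j + 1 / 2) = 0) ∧
    (∀ j : ℤ, m + 1 ≤ j → j ≤ 3 * m + 1 →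
      Real.cos (2 * tI₁ m j) ≠ 0) ∧
    ({j : ℤ | m + 1 ≤ j ∧ j ≤ 3 * m + 1 ∧ 0 < Real.cos (2 * tI₁ m j)}.Finite ∧
      ({j : ℤ | m + 1 ≤ j ∧ j ≤ 3 * m + 1 ∧ 0 < Real.cos (2 * tI₁ m j)}.ncard : ℤ) =
        2 * ⌈(m : ℚ) / 2⌉) := by
  have hM : (0:ℝ) < 2 * (m : ℝ) + 1 := by
    have : (1:ℝ) ≤ (m:ℝ) := by exact_mod_cast hm
    linarith
  refine ⟨?_, ?_, ?_⟩
  · intro j hj1 hj2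
    have h : (2 * (m : ℝ) + 1) * tI₁ m j + 1 / 2
        = (2 * ((j : ℝ) - (m:ℝ) - 1) + 1) * π / 2 := by
      unfold tI₁; field_simp; ring
    rw [h]
    exact Real.cos_eq_zero_iff.mpr ⟨j - m - 1, by push_cast; ring⟩
  · intro j hj1 hj2 hz
    rw [tI_two_mul m j hm] at hz
    obtain ⟨k, hk⟩ := Real.cos_eq_zero_iff.mp hz
    rw [div_eq_iff (ne_of_gt hM)] at hk
    set K : ℤ := 2 * (2 * j - 2 * m - 1) - (2 * k + 1) * (2 * m + 1) with hK
    have hKr : π * (K : ℝ) = 2 := by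
      push_cast [hK]; nlinarith [hk]
    rcases eq_or_ne K 0 with h0 | h0
    · rw [h0] at hKr; norm_num at hKr
    · apply irrational_pi
      refine ⟨(2 : ℚ) / (K : ℚ), ?_⟩
      have hKne : ((K:ℤ):ℝ) ≠ 0 := by exact_mod_cast h0
      push_cast
      rw [eq_comm, eq_div_iff hKne]
      linarith [hKr]
  · set a : ℤ := (3 * m + 1) / 2 with ha
    set b : ℤ := (5 * m + 4) / 2 with hb
    have hset : {j : ℤ | m + 1 ≤ j ∧ j ≤ 3 * m + 1 ∧ 0 < Real.cos (2 * tI₁ m j)}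
        = ↑(Finset.Icc (m+1) a ∪ Finset.Icc b (3*m+1)) := by
      ext j
      simp only [Set.mem_setOf_eq, Finset.coe_union, Set.mem_union, Finset.coe_Icc,
        Set.mem_Icc]
      constructor
      · rintro ⟨h1, h2, h3⟩
        rcases (key m j hm h1 h2).mp h3 with h | h
        · left; exact ⟨h1, by omega⟩
        · right; exact ⟨by omega, h2⟩
      · rintro (⟨h1, h2⟩ | ⟨h1, h2⟩)
        · have h2' : j ≤ 3 * m + 1 := by omega
          exact ⟨h1, h2', (key m j hm h1 h2').mpr (Or.inl (by omega))⟩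
        · have h1' : m + 1 ≤ j := by omega
          exact ⟨h1', h2, (key m j hm h1' h2).mpr (Or.inr (by omega))⟩
    have hceil : ⌈(m : ℚ) / 2⌉ = (m + 1) / 2 := by
      rw [Int.ceil_eq_iff]
      constructor
      · rw [lt_div_iff₀ (by norm_num : (0:ℚ) < 2)]
        exact_mod_cast (show (((m+1)/2 : ℤ) - 1) * 2 < m by omega)
      · rw [div_le_iff₀ (by norm_num : (0:ℚ) < 2)]
        exact_mod_cast (show m ≤ ((m+1)/2 : ℤ) * 2 by omega)
    have hdisj : Disjoint (Finset.Icc (m+1) a) (Finset.Icc b (3*m+1)) := by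
      rw [Finset.disjoint_left]
      intro x hx hx'
      simp only [Finset.mem_Icc] at hx hx'
      omega
    constructor
    · rw [hset]; exact (Finset.Icc (m+1) a ∪ Finset.Icc b (3*m+1)).finite_toSet
    · rw [hset, Set.ncard_coe_finset, Finset.card_union_of_disjoint hdisj,
        Int.card_Icc, Int.card_Icc, hceil]
      push_cast
      omega
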